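/- If p : X̃ → X is a covering map with X̃ a small loop space and p(x̃) = x, then π₁ˢ(X,x) = π₁ˢᵍ(X,x) = p₋(π₁(X̃, x̃)). -/

import Mathlib

open CategoryTheory Topology

attribute [local instance] Path.Homotopic.setoid

noncomputable section

variable {X Y E : Type*} [TopologicalSpace X] [TopologicalSpace Y] [TopologicalSpace E]

/-- Build an element of the fundamental group from a homotopy class of loops. -/
def fromLoop {x : X} (p : Path.Homotopic.Quotient x x) : FundamentalGroup X x :=
  FundamentalGroup.fromPath p

/-- The homotopy class of loops underlying an element of the fundamental group. -/
def toLoop {x : X} (γ : FundamentalGroup X x) : Path.Homotopic.Quotient x x :=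
  FundamentalGroup.toPath γ

/-- A fundamental group element is *small* if it has a loop representative inside every
neighborhood of the basepoint. -/
def IsSmall {x : X} (γ : FundamentalGroup X x) : Prop :=
  ∀ U ∈ nhds x, ∃ δ : Path x x, (∀ t, δ t ∈ U) ∧ fromLoop ⟦δ⟧ = γ

/-- The set of small loop classes, i.e. the carrier of the small loop group `π₁ˢ(X,x)`. -/
def smallSet (X : Type*) [TopologicalSpace X] (x : X) : Set (FundamentalGroup X x) :=
  {γ | IsSmall γ}

/-- Conjugate of a loop class at `y` by a path `α` from `x` to `y`: `α * β * α⁻¹`. -/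
def conjPath {x y : X} (α : Path x y) (β : FundamentalGroup X y) : FundamentalGroup X x :=
  fromLoop (Path.Homotopic.Quotient.trans
    (Path.Homotopic.Quotient.trans (⟦α⟧ : Path.Homotopic.Quotient x y) (toLoop β))
    (⟦α.symm⟧ : Path.Homotopic.Quotient y x))

/-- The SG subgroup `π₁ˢᵍ(X,x)`: generated by conjugates of small loop classes. -/
def sgSubgroup (X : Type*) [TopologicalSpace X] (x : X) : Subgroup (FundamentalGroup X x) :=
  Subgroup.closure {g | ∃ (y : X) (α : Path x y) (β : FundamentalGroup X y), IsSmall β ∧ g = conjPath α β}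

/-- The map induced on fundamental groups by a continuous map. -/
def piMap (f : C(X, Y)) (x : X) (γ : FundamentalGroup X x) : FundamentalGroup Y (f x) :=
  fromLoop (Path.Homotopic.Quotient.map (toLoop γ) f)

/-- A small loop space: a path-connected, non-simply connected space all of whose loops
are small. -/
def IsSmallLoopSpace (X : Type*) [TopologicalSpace X] : Prop :=
  PathConnectedSpace X ∧ ¬ SimplyConnectedSpace X ∧
    ∀ (x : X) (γ : FundamentalGroup X x), IsSmall γ

/-- A space is homotopically Hausdorff if every nontrivial loop class can be kept away from
some neighborhood of its basepoint. -/
def HomotopicallyHausdorff (X : Type*) [TopologicalSpace X] : Prop :=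
  ∀ (x : X) (γ : FundamentalGroup X x), γ ≠ 1 →
    ∃ U ∈ nhds x, ∀ δ : Path x x, (∀ t, δ t ∈ U) → fromLoop ⟦δ⟧ ≠ γ

/-- The image of `π₁(U,y) → π₁(X,y)`: classes of loops having a representative inside `U`. -/
def loopsIn (U : Set X) (y : X) : Set (FundamentalGroup X y) :=
  {γ | ∃ δ : Path y y, (∀ t, δ t ∈ U) ∧ fromLoop ⟦δ⟧ = γ}

/-- A semi-locally small loop space. -/
def SemiLocallySmallLoop (X : Type*) [TopologicalSpace X] : Prop :=
  ∀ x : X, ∃ U : Set X, IsOpen U ∧ x ∈ U ∧ ∀ y ∈ U, loopsIn U y = smallSet X y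



/-! ### Auxiliary lemmas -/

lemma toLoop_fromLoop {x : X} (q : Path.Homotopic.Quotient x x) : toLoop (fromLoop q) = q := rfl

lemma fromLoop_toLoop {x : X} (γ : FundamentalGroup X x) : fromLoop (toLoop γ) = γ :=
  rfl

/-- The functor between fundamental groupoids induced by a continuous map. -/
def piFunctor (f : C(X, Y)) : FundamentalGroupoid X ⥤ FundamentalGroupoid Y where
  obj x := ⟨f x.as⟩
  map {a b} q := Path.Homotopic.Quotient.map q f
  map_id _ := rfl
  map_comp {x y z} p q := by
    refine Quotient.inductionOn₂ p q fun a b => ?_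
    exact congrArg Path.Homotopic.Quotient.mk (Path.map_trans a b f.continuous)

/-- `piMap` as a monoid homomorphism. -/
def piHom (f : C(X, Y)) (x : X) : FundamentalGroup X x →* FundamentalGroup Y (f x) :=
  (piFunctor f).mapEnd (FundamentalGroupoid.mk x)

lemma piMap_eq (f : C(X, Y)) (x : X) (γ : FundamentalGroup X x) :
    piMap f x γ = piHom f x γ :=
  rfl

/-- Extending a partial lift of a path across a trivialized piece. -/
lemma aux_extend_lift {F : Type*} [TopologicalSpace F] {p : C(E, X)}
    (γ : C(unitInterval, X)) (T : Bundle.Trivialization F (p : E → X)) {e : E}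
    {t₀ t₁ : unitInterval} (h01 : t₀ ≤ t₁)
    (hT : ∀ s, t₀ ≤ s → s ≤ t₁ → γ s ∈ T.baseSet)
    (Γ : C(unitInterval, E)) (h0 : Γ 0 = e) (hΓ : ∀ s ≤ t₀, p (Γ s) = γ s) :
    ∃ Γ' : C(unitInterval, E), Γ' 0 = e ∧ ∀ s ≤ t₁, p (Γ' s) = γ s := by
  set f₀ : F := (T (Γ t₀)).2 with hf₀
  have hbase : γ t₀ ∈ T.baseSet := hT t₀ le_rfl h01
  have hsrc : Γ t₀ ∈ T.source := T.mem_source.2 (by rw [hΓ t₀ le_rfl]; exact hbase)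
  have memc : ∀ s : unitInterval, min (max (s : ℝ) (t₀ : ℝ)) (t₁ : ℝ) ∈ unitInterval := by
    intro s
    constructor
    · exact le_min (le_max_of_le_right t₀.2.1) t₁.2.1
    · exact min_le_of_right_le t₁.2.2
  set c : unitInterval → unitInterval := fun s => ⟨_, memc s⟩ with hc
  have hc_cont : Continuous c :=
    Continuous.subtype_mk ((continuous_subtype_val.max continuous_const).min continuous_const) _
  have hc_le : ∀ s, t₀ ≤ c s ∧ c s ≤ t₁ := by
    intro s
    constructor
    · exact Subtype.mk_le_mk.2 (le_min (le_max_right _ _) (Subtype.coe_le_coe.2 h01))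
    · exact Subtype.mk_le_mk.2 (min_le_right _ _)
  have hbasec : ∀ s, γ (c s) ∈ T.baseSet := fun s => hT _ (hc_le s).1 (hc_le s).2
  set g : unitInterval → E := fun s => T.toOpenPartialHomeomorph.symm (γ (c s), f₀) with hg
  have hg_cont : Continuous g := by
    apply T.toOpenPartialHomeomorph.continuousOn_symm.comp_continuous
      ((γ.continuous.comp hc_cont).prodMk continuous_const)
    intro s
    rw [T.target_eq]
    exact Set.mk_mem_prod (hbasec s) (Set.mem_univ _)
  have hct₀ : c t₀ = t₀ := by
    apply Subtype.ext
    simp only [hc]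
    rw [max_self]
    exact min_eq_left (Subtype.coe_le_coe.2 h01)
  have hbd : ∀ s : unitInterval, (s : ℝ) = (t₀ : ℝ) → Γ s = g s := by
    intro s hs
    have hst : s = t₀ := Subtype.ext hs
    rw [hst, hg]
    simp only
    rw [hct₀]
    conv_rhs => rw [← hΓ t₀ le_rfl]
    exact (T.symm_apply_mk_proj hsrc).symm
  refine ⟨⟨fun s => if (s : ℝ) ≤ (t₀ : ℝ) then Γ s else g s,
    Continuous.if_le Γ.continuous hg_cont continuous_subtype_val continuous_const hbd⟩, ?_, ?_⟩
  · simp only [ContinuousMap.coe_mk]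
    rw [if_pos (show ((0 : unitInterval) : ℝ) ≤ (t₀ : ℝ) from t₀.2.1), h0]
  · intro s hs
    simp only [ContinuousMap.coe_mk]
    by_cases h : (s : ℝ) ≤ (t₀ : ℝ)
    · rw [if_pos h]
      exact hΓ s h
    · rw [if_neg h]
      push_neg at h
      have hcs : c s = s := by
        apply Subtype.ext
        simp only [hc]
        rw [max_eq_left h.le]
        exact min_eq_left (Subtype.coe_le_coe.2 hs)
      rw [hg]
      simp only
      rw [hcs]
      exact T.proj_symm_apply' (hcs ▸ hbasec s)

/-- Path lifting for covering maps, continuous-map version. -/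
lemma aux_exists_lift {p : C(E, X)} (hp : IsCoveringMap p) (γ : C(unitInterval, X))
    (e : E) (he : p e = γ 0) :
    ∃ Γ : C(unitInterval, E), Γ 0 = e ∧ ∀ s, p (Γ s) = γ s := by
  obtain ⟨Γ, hΓ, h0⟩ := hp.exists_path_lifts γ e he.symm
  exact ⟨Γ, h0, fun s => congrFun hΓ s⟩

/-- Path lifting for covering maps. -/
lemma aux_path_lift {p : C(E, X)} (hp : IsCoveringMap p) {b : X} (e : E)
    (α : Path (p e) b) :
    ∃ (e' : E) (A : Path e e'), ∀ s, p (A s) = α s := by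
  obtain ⟨Γ, h0, hΓ⟩ := aux_exists_lift hp α.toContinuousMap e (by simp)
  exact ⟨Γ 1, ⟨⟨fun s => Γ s, Γ.continuous⟩, h0, rfl⟩, fun s => by simpa using hΓ s⟩

/-- The image of the fundamental group of the total space of a covering whose total space is a
small loop space is exactly the small loop group. -/
lemma range_piMap_eq_smallSet {p : C(E, X)} (hp : IsCoveringMap p) (hE : IsSmallLoopSpace E)
    (xt : E) : Set.range (piMap p xt) = smallSet X (p xt) := by
  apply Set.Subset.antisymm
  · rintro _ ⟨γ, rfl⟩ U hU
    obtain ⟨δt, hδt, hfl⟩ := hE.2.2 xt γ (p ⁻¹' U) (p.continuous.continuousAt.preimage_mem_nhds hU)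
    refine ⟨δt.map p.continuous, fun t => hδt t, ?_⟩
    show fromLoop ⟦δt.map p.continuous⟧ = piMap p xt γ
    unfold piMap
    congr 1
    subst hfl
    exact Path.Homotopic.Quotient.mk_map δt p
  · rintro γ hγ
    haveI : Nonempty (p ⁻¹' {p xt}) := ⟨⟨xt, rfl⟩⟩
    obtain ⟨T, hT⟩ : ∃ T : Bundle.Trivialization (p ⁻¹' {p xt}) p, p xt ∈ T.baseSet :=
      ⟨(hp (p xt)).toTrivialization, (hp (p xt)).mem_toTrivialization_baseSet⟩
    obtain ⟨δ, hδ, hfl⟩ := hγ T.baseSet (T.open_baseSet.mem_nhds hT)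
    have hsrc : xt ∈ T.source := T.mem_source.2 hT
    have hcont : Continuous fun t => T.toOpenPartialHomeomorph.symm (δ t, (T xt).2) := by
      apply T.toOpenPartialHomeomorph.continuousOn_symm.comp_continuous
        (δ.continuous.prodMk continuous_const)
      intro t
      rw [T.target_eq]
      exact Set.mk_mem_prod (hδ t) (Set.mem_univ _)
    set δt : Path xt xt :=
      { toFun := fun t => T.toOpenPartialHomeomorph.symm (δ t, (T xt).2)
        continuous_toFun := hcont
        source' := by
          beta_reduce
          rw [δ.source]
          exact T.symm_apply_mk_proj hsrc
        target' := by
          beta_reduce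
          rw [δ.target]
          exact T.symm_apply_mk_proj hsrc } with hδtdef
    have hmapδ : δt.map p.continuous = δ := by
      ext t
      exact T.proj_symm_apply' (hδ t)
    refine ⟨fromLoop ⟦δt⟧, ?_⟩
    show fromLoop (Path.Homotopic.Quotient.map (toLoop (fromLoop ⟦δt⟧)) p) = γ
    show fromLoop ⟦δt.map p.continuous⟧ = γ
    rw [hmapδ, hfl]

lemma small_mem_sg {x : X} (γ : FundamentalGroup X x) (hγ : IsSmall γ) : γ ∈ sgSubgroup X x := by
  apply Subgroup.subset_closure
  refine ⟨x, Path.refl x, γ, hγ, ?_⟩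
  unfold conjPath
  have h1 : (Path.refl x).symm = Path.refl x := Path.refl_symm
  rw [h1]
  have h2 : Path.Homotopic.Quotient.trans
      (Path.Homotopic.Quotient.trans (⟦Path.refl x⟧ : Path.Homotopic.Quotient x x) (toLoop γ))
      (⟦Path.refl x⟧ : Path.Homotopic.Quotient x x) = toLoop γ := by
    show (𝟙 (FundamentalGroupoid.mk x) ≫ toLoop γ) ≫ 𝟙 (FundamentalGroupoid.mk x) = toLoop γ
    simp
  rw [h2, fromLoop_toLoop]

lemma sg_le_range {p : C(E, X)} (hp : IsCoveringMap p) (hE : IsSmallLoopSpace E) (xt : E) :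
    (sgSubgroup X (p xt) : Set (FundamentalGroup X (p xt))) ⊆ Set.range (piMap p xt) := by
  have hrange : Set.range (piMap p xt)
      = ((piHom p xt).range : Set (FundamentalGroup X (p xt))) := by
    ext γ
    simp only [Set.mem_range, MonoidHom.coe_range, MonoidHom.mem_range]
    exact exists_congr fun g => by rw [piMap_eq]
  rw [hrange]
  have hle : sgSubgroup X (p xt) ≤ (piHom p xt).range := by
    apply (Subgroup.closure_le _).2
    rintro g ⟨y, α, β, hβ, rfl⟩
    obtain ⟨e', A, hA⟩ := aux_path_lift hp xt α
    have hy : y = p e' := by rw [← α.target, ← hA 1, A.target]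
    subst hy
    have hβ' : β ∈ Set.range (piMap p e') := by
      rw [range_piMap_eq_smallSet hp hE e']
      exact hβ
    obtain ⟨β', rfl⟩ := hβ'
    have hα : α = A.map p.continuous := Path.ext (funext fun s => (hA s).symm)
    rw [SetLike.mem_coe, MonoidHom.mem_range]
    refine ⟨fromLoop (Path.Homotopic.Quotient.trans
      (Path.Homotopic.Quotient.trans (⟦A⟧ : Path.Homotopic.Quotient xt e') (toLoop β'))
      (⟦A.symm⟧ : Path.Homotopic.Quotient e' xt)), ?_⟩
    rw [← piMap_eq]
    obtain ⟨b, hb⟩ := Quotient.exists_rep (toLoop β')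
    unfold piMap conjPath
    congr 1
    rw [toLoop_fromLoop, ← hb]
    show Path.Homotopic.Quotient.map
        (Path.Homotopic.Quotient.trans (Path.Homotopic.Quotient.trans ⟦A⟧ ⟦b⟧) ⟦A.symm⟧) p =
      Path.Homotopic.Quotient.trans
        (Path.Homotopic.Quotient.trans ⟦α⟧ (Path.Homotopic.Quotient.map ⟦b⟧ p)) ⟦α.symm⟧
    show (⟦((A.trans b).trans A.symm).map p.continuous⟧ : Path.Homotopic.Quotient _ _) =
      ⟦(α.trans (b.map p.continuous)).trans α.symm⟧
    congr 1
    rw [Path.map_trans, Path.map_trans, ← Path.map_symm, hα]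
  exact hle


/-- if `p : X̃ → X` is a covering with `X̃` a small loop space and `p xt = x`,
then `π₁ˢ(X,x) = π₁ˢᵍ(X,x) = p₋(π₁(X̃, xt))`. -/
theorem smallSet_eq_sg_eq_range_of_small_covering {E X : Type*} [TopologicalSpace E]
    [TopologicalSpace X] (p : C(E, X)) (hp : IsCoveringMap p) (hE : IsSmallLoopSpace E)
    (xt : E) :
    smallSet X (p xt) = (sgSubgroup X (p xt) : Set (FundamentalGroup X (p xt))) ∧
      (sgSubgroup X (p xt) : Set (FundamentalGroup X (p xt))) = Set.range (piMap p xt) := by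
  have hA := range_piMap_eq_smallSet hp hE xt
  have h1 : smallSet X (p xt) ⊆ (sgSubgroup X (p xt) : Set (FundamentalGroup X (p xt))) :=
    fun γ hγ => small_mem_sg γ hγ
  have h2 : (sgSubgroup X (p xt) : Set (FundamentalGroup X (p xt))) ⊆ Set.range (piMap p xt) :=
    sg_le_range hp hE xt
  refine ⟨Set.Subset.antisymm h1 (fun γ hγ => hA ▸ h2 hγ),
    Set.Subset.antisymm h2 (fun γ hγ => h1 (hA ▸ hγ))⟩


end
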